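/- For every ε > 0 there exists a map φ : Δ_∞ → C([0, ω^ω]) such that (1 − ε)·d_Δ(σ,τ) ≤ ‖φ(σ) − φ(τ)‖_∞ ≤ d_Δ(σ,τ) for all σ, τ ∈ Δ_∞; that is, the infinite Hamming cube Δ_∞ embeds almost isometrically into C([0, ω^ω]). -/

import Mathlib

noncomputable section HammingEmbed

open Ordinal

universe u

/-- `W s = ω ^ s`. -/
private def W (s : ℕ) : Ordinal.{u} := omega0 ^ (s : Ordinal)

private def hgt (C b : ℕ) : ℕ := C * (b + 1) - 1

private def AA (C : ℕ) : ℕ → Ordinal.{u}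
  | 0 => 0
  | j + 1 => AA C j + W (hgt C (j / 2))

private lemma W_pos (s : ℕ) : 0 < W s := opow_pos _ omega0_pos

private lemma W_succ (s : ℕ) : W (s + 1) = W s * omega0 := by
  rw [W, W, Nat.cast_add, Nat.cast_one, add_one_eq_succ, opow_succ]

private lemma W_mono {s t : ℕ} (h : s ≤ t) : W s ≤ W t :=
  opow_le_opow_right omega0_pos (by exact_mod_cast h)

private lemma W_mul_nat_lt (s j : ℕ) : W s * (j : Ordinal) < W (s + 1) := by
  rw [W_succ]
  exact mul_lt_mul_of_pos_left (nat_lt_omega0 j) (W_pos s)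

private lemma W_mul_nat_succ_lt (s j : ℕ) : W s * ((j : Ordinal) + 1) < W (s + 1) := by
  have := W_mul_nat_lt s (j + 1)
  rwa [Nat.cast_add, Nat.cast_one] at this

private lemma exists_block {s : ℕ} {z : Ordinal.{u}} (h : z < W (s + 1)) :
    ∃ j : ℕ, z ≤ W s * ((j : Ordinal) + 1) := by
  rw [W_succ] at h
  rcases (lt_mul_iff_of_isSuccLimit isSuccLimit_omega0).1 h with ⟨c, hc, hzc⟩
  rcases lt_omega0.1 hc with ⟨n, rfl⟩
  refine ⟨n, le_trans hzc.le ?_⟩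
  exact mul_le_mul_right le_self_add _

private def blockSet (s : ℕ) (z : Ordinal.{u}) : Set ℕ := {j' : ℕ | z ≤ W s * ((j' : Ordinal) + 1)}

private lemma sInf_block_eq {s j : ℕ} {z : Ordinal.{u}} (h1 : W s * (j : Ordinal) < z)
    (h2 : z ≤ W s * ((j : Ordinal) + 1)) :
    sInf (blockSet s z) = j := by
  have hmem : j ∈ blockSet s z := h2
  refine le_antisymm (Nat.sInf_le hmem) ?_
  by_contra hlt
  push_neg at hlt
  set m : ℕ := sInf (blockSet s z) with hm
  have h3 : z ≤ W s * ((m : Ordinal) + 1) := Nat.sInf_mem ⟨j, hmem⟩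
  have h4 : W s * ((m : Ordinal) + 1) ≤ W s * (j : Ordinal) := by
    apply mul_le_mul_right
    have h5 : (m + 1 : ℕ) ≤ j := hlt
    exact_mod_cast h5
  exact absurd (le_trans h3 h4) (not_le.2 h1)


private def dAux : ℕ → Ordinal.{u} → ℕ → (ℕ → ℤ) → (ℕ → ℤ)
  | 0, _, _, w => w
  | s + 1, z, last, w =>
    if z = W (s + 1) then w
    else
      let j := sInf (blockSet s z)
      dAux s (z - W s * (j : Ordinal)) (last + 1 + j / 2)
        (Function.update w (last + 1 + j / 2) (if j % 2 = 0 then 1 else -1))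

private lemma dAux_node (s last : ℕ) (w : ℕ → ℤ) : dAux s (W s) last w = w := by
  cases s with
  | zero => rfl
  | succ s => simp [dAux]

private lemma dAux_step {s j : ℕ} {z : Ordinal.{u}} (last : ℕ) (w : ℕ → ℤ)
    (h1 : W s * (j : Ordinal) < z) (h2 : z ≤ W s * ((j : Ordinal) + 1)) :
    dAux (s + 1) z last w = dAux s (z - W s * (j : Ordinal)) (last + 1 + j / 2)
      (Function.update w (last + 1 + j / 2) (if j % 2 = 0 then 1 else -1)) := by
  have hne : z ≠ W (s + 1) := ne_of_lt (lt_of_le_of_lt h2 (W_mul_nat_succ_lt s j))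
  rw [dAux, if_neg hne]
  simp only [sInf_block_eq h1 h2]

private lemma dAux_low : ∀ (s : ℕ) (z : Ordinal.{u}) (last : ℕ) (w : ℕ → ℤ) (i : ℕ),
    i ≤ last → dAux s z last w i = w i := by
  intro s
  induction s with
  | zero => intro z last w i _; rfl
  | succ s ih =>
    intro z last w i hi
    by_cases hz : z = W (s + 1)
    · rw [dAux, if_pos hz]
    · rw [dAux, if_neg hz]
      set j := sInf (blockSet s z) with hj
      have hb : i ≤ last + 1 + j / 2 := le_trans hi (by omega)
      rw [ih _ _ _ _ hb, Function.update_of_ne (by omega)]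

private lemma dAux_abs : ∀ (s : ℕ) (z : Ordinal.{u}) (last : ℕ) (w : ℕ → ℤ),
    (∀ i, |w i| ≤ 1) → ∀ i, |dAux s z last w i| ≤ 1 := by
  intro s
  induction s with
  | zero => intro z last w hw i; exact hw i
  | succ s ih =>
    intro z last w hw i
    by_cases hz : z = W (s + 1)
    · rw [dAux, if_pos hz]; exact hw i
    · rw [dAux, if_neg hz]
      apply ih
      intro i'
      rcases eq_or_ne i' (last + 1 + sInf (blockSet s z) / 2) with h | h
      · subst h; rw [Function.update_self]; split <;> norm_num
      · rw [Function.update_of_ne h]; exact hw i'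


/-- Key stability lemma: near any point `xh` of a subtree, `dAux` values at low
coordinates agree with the value at `xh`. -/
private lemma dAux_stable (B : ℕ) : ∀ (s : ℕ) (xh : Ordinal.{u}) (last : ℕ) (w : ℕ → ℤ),
    0 < xh → xh ≤ W s →
    ∃ zb, zb < xh ∧ ∀ z, zb < z → z ≤ xh → ∀ i, i ≤ B →
      dAux s z last w i = dAux s xh last w i := by
  intro s
  induction s with
  | zero =>
    intro xh last w hpos _
    exact ⟨0, hpos, fun z _ _ i _ => rfl⟩
  | succ s ih =>
    intro xh last w hpos hle
    rcases eq_or_lt_of_le hle with hx | hx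
    · -- xh is the node of this subtree
      refine ⟨W s * ((2 * B + 4 : ℕ) : Ordinal), ?_, ?_⟩
      · rw [hx]; exact W_mul_nat_lt s (2 * B + 4)
      · intro z hz1 hz2 i hi
        rcases eq_or_lt_of_le hz2 with rfl | hz3
        · rfl
        rw [hx] at hz3
        -- z is in a child block with large index
        have hex : ∃ j : ℕ, z ≤ W s * ((j : Ordinal) + 1) := exists_block hz3
        set j := sInf (blockSet s z) with hj
        have hjmem : z ≤ W s * ((j : Ordinal) + 1) := Nat.sInf_mem hex
        have hjlarge : 2 * B + 4 ≤ j := by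
          by_contra hcon
          push_neg at hcon
          have : W s * ((j : Ordinal) + 1) ≤ W s * ((2 * B + 4 : ℕ) : Ordinal) := by
            apply mul_le_mul_right
            have : (j + 1 : ℕ) ≤ 2 * B + 4 := hcon
            exact_mod_cast this
          exact absurd (le_trans hjmem this) (not_le.2 hz1)
        have hjlt : W s * (j : Ordinal) < z := by
          rcases Nat.eq_zero_or_pos j with h0 | h0
          · omega
          · rcases Nat.exists_eq_succ_of_ne_zero (Nat.pos_iff_ne_zero.1 h0) with ⟨k, hk⟩
            have hknot : (k : ℕ) ∉ blockSet s z := Nat.notMem_of_lt_sInf (by omega)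
            have : ¬ z ≤ W s * ((k : Ordinal) + 1) := hknot
            push_neg at this
            have hcast : ((k : Ordinal) + 1) = ((j : ℕ) : Ordinal) := by
              rw [hk]; push_cast; ring
            rwa [hcast] at this
        rw [dAux_step last w hjlt hjmem, hx, dAux_node]
        have hib : i ≤ last + 1 + j / 2 := by omega
        rw [dAux_low _ _ _ _ _ hib, Function.update_of_ne (by omega)]
    · -- xh is inside a child block
      have hex : ∃ j : ℕ, xh ≤ W s * ((j : Ordinal) + 1) := exists_block hx
      set jx := sInf (blockSet s xh) with hjx
      have hjmem : xh ≤ W s * ((jx : Ordinal) + 1) := Nat.sInf_mem hex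
      have hjlt : W s * (jx : Ordinal) < xh := by
        rcases Nat.eq_zero_or_pos jx with h0 | h0
        · rw [h0]; simpa using hpos
        · rcases Nat.exists_eq_succ_of_ne_zero (Nat.pos_iff_ne_zero.1 h0) with ⟨k, hk⟩
          have hknot : (k : ℕ) ∉ blockSet s xh := Nat.notMem_of_lt_sInf (by omega)
          have : ¬ xh ≤ W s * ((k : Ordinal) + 1) := hknot
          push_neg at this
          have hcast : ((k : Ordinal) + 1) = ((jx : ℕ) : Ordinal) := by
            rw [hk]; push_cast; ring
          rwa [hcast] at this
      set relx := xh - W s * (jx : Ordinal) with hrelx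
      have hsum : W s * (jx : Ordinal) + relx = xh := Ordinal.add_sub_cancel_of_le hjlt.le
      have hrelpos : 0 < relx := by
        rcases (zero_le : (0 : Ordinal) ≤ relx).lt_or_eq with h0 | h0
        · exact h0
        · rw [hrelx] at h0
          exact absurd (Ordinal.sub_eq_zero_iff_le.1 h0.symm) (not_le.2 hjlt)
      have hrelle : relx ≤ W s := by
        rw [hrelx, Ordinal.sub_le]
        rw [mul_add_one] at hjmem
        exact hjmem
      obtain ⟨relb, hrelb, hstab⟩ := ih relx (last + 1 + jx / 2)
        (Function.update w (last + 1 + jx / 2) (if jx % 2 = 0 then 1 else -1)) hrelpos hrelle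
      refine ⟨W s * (jx : Ordinal) + relb, ?_, ?_⟩
      · calc W s * (jx : Ordinal) + relb < W s * (jx : Ordinal) + relx :=
              add_lt_add_iff_left _ |>.2 hrelb
          _ = xh := hsum
      · intro z hz1 hz2 i hi
        have hz3 : W s * (jx : Ordinal) < z := lt_of_le_of_lt (le_self_add) hz1
        have hz4 : z ≤ W s * ((jx : Ordinal) + 1) := le_trans hz2 hjmem
        have hrelz : W s * (jx : Ordinal) + (z - W s * (jx : Ordinal)) = z :=
          Ordinal.add_sub_cancel_of_le hz3.le
        have hb1 : relb < z - W s * (jx : Ordinal) := by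
          rw [← add_lt_add_iff_left (W s * (jx : Ordinal)), hrelz]; exact hz1
        have hb2 : z - W s * (jx : Ordinal) ≤ relx := by
          rw [← add_le_add_iff_left (W s * (jx : Ordinal)), hrelz, hsum]; exact hz2
        rw [dAux_step last w hz3 hz4, dAux_step last w hjlt hjmem]
        exact hstab _ hb1 hb2 i hi


private lemma AA_mono (C : ℕ) : Monotone (AA C) := by
  apply monotone_nat_of_le_succ
  intro j
  exact le_self_add

private lemma W_lt_Omega (k : ℕ) : W k < omega0 ^ omega0 :=
  (opow_lt_opow_iff_right one_lt_omega0).2 (nat_lt_omega0 k)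

private lemma AA_lt_Omega (C j : ℕ) : AA C j < omega0 ^ omega0 := by
  induction j with
  | zero => exact opow_pos _ omega0_pos
  | succ j ih => exact principal_add_omega0_opow omega0 ih (W_lt_Omega _)

private lemma hgt_ge (C b : ℕ) (hC : 1 ≤ C) : b ≤ hgt C b := by
  have h := Nat.le_mul_of_pos_left (b + 1) hC
  unfold hgt; omega

private lemma AA_bound {C : ℕ} (hC : 1 ≤ C) {x : Ordinal.{u}} (hx : x < omega0 ^ omega0) :
    ∃ j : ℕ, x ≤ AA C (j + 1) := by
  rcases (lt_opow_of_isSuccLimit omega0_ne_zero isSuccLimit_omega0).1 hx with ⟨b, hb, hxb⟩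
  rcases lt_omega0.1 hb with ⟨n, rfl⟩
  refine ⟨2 * n + 1, ?_⟩
  have h1 : x ≤ W n := le_of_lt hxb
  have h2 : W n ≤ W (hgt C ((2 * n + 1) / 2)) := by
    apply W_mono
    have : (2 * n + 1) / 2 = n := by omega
    rw [this]
    exact hgt_ge C n hC
  calc x ≤ W (hgt C ((2 * n + 1) / 2)) := le_trans h1 h2
    _ ≤ AA C (2 * n + 1) + W (hgt C ((2 * n + 1) / 2)) := le_add_self
    _ = AA C (2 * n + 1 + 1) := rfl

private def rootSet (C : ℕ) (x : Ordinal.{u}) : Set ℕ := {j : ℕ | x ≤ AA C (j + 1)}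

private lemma sInf_root_eq {C j : ℕ} {x : Ordinal.{u}} (h1 : AA C j < x) (h2 : x ≤ AA C (j + 1)) :
    sInf (rootSet C x) = j := by
  have hmem : j ∈ rootSet C x := h2
  refine le_antisymm (Nat.sInf_le hmem) ?_
  by_contra hlt
  push_neg at hlt
  set m : ℕ := sInf (rootSet C x) with hm
  have h3 : x ≤ AA C (m + 1) := Nat.sInf_mem ⟨j, hmem⟩
  have h4 : AA C (m + 1) ≤ AA C j := AA_mono C (by omega)
  exact absurd (le_trans h3 h4) (not_le.2 h1)

private def dec (C : ℕ) (x : Ordinal.{u}) : ℕ → ℤ :=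
  if x = 0 ∨ omega0 ^ omega0 ≤ x then 0
  else
    let j := sInf (rootSet C x)
    dAux (hgt C (j / 2)) (x - AA C j) (j / 2)
      (Function.update 0 (j / 2) (if j % 2 = 0 then 1 else -1))

private lemma dec_triv {C : ℕ} {x : Ordinal.{u}} (h : x = 0 ∨ omega0 ^ omega0 ≤ x) :
    dec C x = 0 := by
  rw [dec, if_pos h]

private lemma dec_eq {C j : ℕ} {x : Ordinal.{u}} (hΩ : x < omega0 ^ omega0)
    (h1 : AA C j < x) (h2 : x ≤ AA C (j + 1)) :
    dec C x = dAux (hgt C (j / 2)) (x - AA C j) (j / 2)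
      (Function.update 0 (j / 2) (if j % 2 = 0 then 1 else -1)) := by
  have h0 : x ≠ 0 := by
    intro h; rw [h] at h1; exact absurd h1 (by simp [not_lt_zero])
  rw [dec, if_neg (by push_neg; exact ⟨h0, hΩ⟩)]
  simp only [sInf_root_eq h1 h2]

private lemma dec_abs (C : ℕ) (x : Ordinal.{u}) (i : ℕ) : |dec C x i| ≤ 1 := by
  by_cases h : x = 0 ∨ omega0 ^ omega0 ≤ x
  · rw [dec_triv h]; norm_num
  · rw [dec, if_neg h]
    apply dAux_abs
    intro i'
    rcases eq_or_ne i' (sInf (rootSet C x) / 2) with he | he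
    · subst he; rw [Function.update_self]; split <;> norm_num
    · rw [Function.update_of_ne he]; norm_num


private lemma lt_add_one_iff_le {a b : Ordinal.{u}} : a < b + 1 ↔ a ≤ b := by
  rw [add_one_eq_succ, Order.lt_succ_iff]

private lemma root_decomp {C : ℕ} (hC : 1 ≤ C) {x : Ordinal.{u}} (h0 : 0 < x)
    (hΩ : x < omega0 ^ omega0) :
    AA C (sInf (rootSet C x)) < x ∧ x ≤ AA C (sInf (rootSet C x) + 1) := by
  have hex : ∃ j : ℕ, x ≤ AA C (j + 1) := AA_bound hC hΩ
  set j := sInf (rootSet C x) with hj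
  have hmem : x ≤ AA C (j + 1) := Nat.sInf_mem hex
  refine ⟨?_, hmem⟩
  rcases Nat.eq_zero_or_pos j with hz | hz
  · rw [hz]; exact h0
  · rcases Nat.exists_eq_succ_of_ne_zero (Nat.pos_iff_ne_zero.1 hz) with ⟨k, hk⟩
    have hknot : (k : ℕ) ∉ rootSet C x := Nat.notMem_of_lt_sInf (by omega)
    have : ¬ x ≤ AA C (k + 1) := hknot
    push_neg at this
    simpa [hk] using this

private lemma dec_loc_const (C : ℕ) (hC : 1 ≤ C) (x : Ordinal.{u}) (B : ℕ) :
    ∃ U : Set Ordinal.{u}, IsOpen U ∧ x ∈ U ∧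
      ∀ y ∈ U, ∀ i ≤ B, dec C y i = dec C x i := by
  rcases eq_or_ne x 0 with rfl | hx0
  · refine ⟨Set.Iio 1, isOpen_Iio, ?_, ?_⟩
    · exact Ordinal.lt_one_iff_zero.2 rfl
    · intro y hy i _
      rw [Ordinal.lt_one_iff_zero.1 hy]
  rcases lt_trichotomy x (omega0 ^ omega0) with hxΩ | hxΩ | hxΩ
  · -- 0 < x < ω^ω
    have h0 : 0 < x := pos_iff_ne_zero.2 hx0
    obtain ⟨h1, h2⟩ := root_decomp hC h0 hxΩ
    set jx := sInf (rootSet C x) with hjx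
    set s := hgt C (jx / 2) with hs
    set relx := x - AA C jx with hrelx
    have hsum : AA C jx + relx = x := Ordinal.add_sub_cancel_of_le h1.le
    have hrelpos : 0 < relx := by
      rcases (zero_le : (0 : Ordinal) ≤ relx).lt_or_eq with hp | hp
      · exact hp
      · rw [hrelx] at hp
        exact absurd (Ordinal.sub_eq_zero_iff_le.1 hp.symm) (not_le.2 h1)
    have hrelle : relx ≤ W s := by
      rw [hrelx, Ordinal.sub_le]
      exact h2
    obtain ⟨relb, hrelb, hstab⟩ := dAux_stable B s relx (jx / 2)
      (Function.update 0 (jx / 2) (if jx % 2 = 0 then 1 else -1)) hrelpos hrelle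
    refine ⟨Set.Ioo (AA C jx + relb) (x + 1), isOpen_Ioo, ?_, ?_⟩
    · constructor
      · calc AA C jx + relb < AA C jx + relx := add_lt_add_iff_left _ |>.2 hrelb
          _ = x := hsum
      · exact lt_add_one_iff_le.2 le_rfl
    · intro y hy i hi
      obtain ⟨hy1, hy2⟩ := hy
      have hyx : y ≤ x := lt_add_one_iff_le.1 hy2
      have hy3 : AA C jx < y := lt_of_le_of_lt (le_self_add) hy1
      have hy4 : y ≤ AA C (jx + 1) := le_trans hyx h2
      have hyΩ : y < omega0 ^ omega0 := lt_of_le_of_lt hyx hxΩ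
      have hrely : AA C jx + (y - AA C jx) = y := Ordinal.add_sub_cancel_of_le hy3.le
      have hb1 : relb < y - AA C jx := by
        rw [← add_lt_add_iff_left (AA C jx), hrely]; exact hy1
      have hb2 : y - AA C jx ≤ relx := by
        rw [← add_le_add_iff_left (AA C jx), hrely, hsum]; exact hyx
      rw [dec_eq hyΩ hy3 hy4, dec_eq hxΩ h1 h2]
      exact hstab _ hb1 hb2 i hi
  · -- x = ω^ω
    subst hxΩ
    refine ⟨Set.Ioo (AA C (2 * B + 3)) (omega0 ^ omega0 + 1), isOpen_Ioo, ?_, ?_⟩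
    · exact ⟨AA_lt_Omega C _, lt_add_one_iff_le.2 le_rfl⟩
    · intro y hy i hi
      obtain ⟨hy1, hy2⟩ := hy
      have hyx : y ≤ omega0 ^ omega0 := lt_add_one_iff_le.1 hy2
      rw [dec_triv (Or.inr le_rfl)]
      rcases eq_or_lt_of_le hyx with rfl | hyΩ
      · rw [dec_triv (Or.inr le_rfl)]
      have hy0 : 0 < y := lt_of_le_of_lt zero_le hy1
      obtain ⟨g1, g2⟩ := root_decomp hC hy0 hyΩ
      set jy := sInf (rootSet C y) with hjy
      have hjylarge : 2 * B + 3 ≤ jy := by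
        by_contra hcon
        push_neg at hcon
        have : AA C (jy + 1) ≤ AA C (2 * B + 3) := AA_mono C (by omega)
        exact absurd (le_trans g2 this) (not_le.2 hy1)
      rw [dec_eq hyΩ g1 g2]
      have hib : i ≤ jy / 2 := by omega
      rw [dAux_low _ _ _ _ _ hib, Function.update_of_ne (by omega)]
  · -- ω^ω < x
    refine ⟨Set.Ioo (omega0 ^ omega0) (x + 1), isOpen_Ioo, ?_, ?_⟩
    · exact ⟨hxΩ, lt_add_one_iff_le.2 le_rfl⟩
    · intro y hy i _
      rw [dec_triv (Or.inr hy.1.le), dec_triv (Or.inr hxΩ.le)]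

private lemma G_cont (C : ℕ) (hC : 1 ≤ C) (σ : Finset ℕ) :
    Continuous (fun x : Ordinal.{u} => ∑ i ∈ σ, ((dec C x i : ℤ) : ℝ)) := by
  rw [continuous_iff_continuousAt]
  intro x
  obtain ⟨U, hU, hxU, hconst⟩ := dec_loc_const C hC x (σ.sup id)
  apply Filter.EventuallyEq.continuousAt (y := ∑ i ∈ σ, ((dec C x i : ℤ) : ℝ))
  filter_upwards [hU.mem_nhds hxU] with y hy
  refine Finset.sum_congr rfl fun i hi => ?_
  rw [hconst y hy i (Finset.le_sup (f := id) hi)]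


private def eAux (sg : ℕ → ℤ) : List ℕ → ℕ → ℕ → Ordinal.{u}
  | [], _, s => W s
  | e :: rest, last, s =>
      W (s - 1) * (((2 * (e - last - 1) + (if sg e = 1 then 0 else 1)) : ℕ) : Ordinal)
        + eAux sg rest e (s - 1)

private lemma eAux_bounds (sg : ℕ → ℤ) :
    ∀ (L : List ℕ) (last s : ℕ), L.length ≤ s →
      0 < eAux.{u} sg L last s ∧ eAux.{u} sg L last s ≤ W.{u} s := by
  intro L
  induction L with
  | nil => intro last s _; exact ⟨W_pos s, le_rfl⟩
  | cons e rest ih =>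
    intro last s hlen
    obtain ⟨s', rfl⟩ : ∃ s', s = s' + 1 := by
      cases s with
      | zero => simp at hlen
      | succ s' => exact ⟨s', rfl⟩
    have hlen' : rest.length ≤ s' := by simpa using hlen
    obtain ⟨hpos, hle⟩ := ih e s' hlen'
    simp only [eAux, Nat.add_sub_cancel]
    constructor
    · exact lt_of_lt_of_le hpos (le_add_self)
    · set idx : ℕ := 2 * (e - last - 1) + (if sg e = 1 then 0 else 1) with hidx
      calc W s' * (idx : Ordinal) + eAux sg rest e s'
          ≤ W s' * (idx : Ordinal) + W s' := add_le_add_right hle _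
        _ = W s' * ((idx : Ordinal) + 1) := by rw [mul_add_one]
        _ ≤ W s' * omega0 := mul_le_mul_right (le_of_lt (by exact_mod_cast nat_lt_omega0 (idx + 1))) _
        _ = W (s' + 1) := (W_succ s').symm

private lemma eAux_le (sg : ℕ → ℤ) (L : List ℕ) (last s : ℕ) (h : L.length ≤ s) :
    eAux.{u} sg L last s ≤ W.{u} s := (eAux_bounds.{u} sg L last s h).2

private lemma dAux_eAux (sg : ℕ → ℤ) (hsg : ∀ i, sg i = 1 ∨ sg i = -1) :
    ∀ (L : List ℕ) (s last : ℕ) (w : ℕ → ℤ), List.Chain (· < ·) last L → L.length ≤ s →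
      dAux s (eAux sg L last s) last w = fun i => if i ∈ L then sg i else w i := by
  intro L
  induction L with
  | nil =>
    intro s last w _ _
    funext i
    simp [eAux, dAux_node]
  | cons e rest ih =>
    intro s last w hch hlen
    obtain ⟨s', rfl⟩ : ∃ s', s = s' + 1 := by
      cases s with
      | zero => simp at hlen
      | succ s' => exact ⟨s', rfl⟩
    have hlen' : rest.length ≤ s' := by simpa using hlen
    rcases List.chain_cons.1 hch with ⟨hlast, hch'⟩
    obtain ⟨hpos, hle⟩ := eAux_bounds sg rest e s' hlen'
    set idx : ℕ := 2 * (e - last - 1) + (if sg e = 1 then 0 else 1) with hidx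
    have hz : eAux sg (e :: rest) last (s' + 1)
        = W s' * (idx : Ordinal) + eAux sg rest e s' := by
      simp only [eAux, Nat.add_sub_cancel]; rfl
    have h1 : W s' * (idx : Ordinal) < eAux sg (e :: rest) last (s' + 1) := by
      rw [hz]
      exact lt_of_eq_of_lt (add_zero _).symm ((add_lt_add_iff_left _).2 hpos)
    have h2 : eAux sg (e :: rest) last (s' + 1) ≤ W s' * ((idx : Ordinal) + 1) := by
      rw [hz, mul_add_one]
      exact add_le_add_right hle _
    have hbit : (if sg e = 1 then 0 else 1) ≤ 1 := by split <;> omega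
    have hdiv : last + 1 + idx / 2 = e := by omega
    have hmod : (if idx % 2 = 0 then (1 : ℤ) else -1) = sg e := by
      rcases hsg e with h | h <;> simp [hidx, h, Nat.add_mul_mod_self_left] <;> omega
    rw [dAux_step last w h1 h2, hz, Ordinal.add_sub_cancel, hdiv, hmod,
      ih s' e (Function.update w e (sg e)) hch' hlen']
    funext i
    rcases eq_or_ne i e with rfl | hne
    · by_cases hmem : i ∈ rest <;> simp [hmem]
    · by_cases hmem : i ∈ rest <;> simp [hmem, hne, Function.update_of_ne hne]


private lemma dec_encode (C : ℕ) (hC : 1 ≤ C) (sg : ℕ → ℤ) (hsg : ∀ i, sg i = 1 ∨ sg i = -1)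
    (e1 : ℕ) (rest : List ℕ) (hch : List.Chain (· < ·) e1 rest)
    (hlen : rest.length ≤ hgt C e1) :
    dec C (AA C (2 * e1 + (if sg e1 = 1 then 0 else 1)) + eAux sg rest e1 (hgt C e1))
      = fun i => if i ∈ e1 :: rest then sg i else 0 := by
  set j1 : ℕ := 2 * e1 + (if sg e1 = 1 then 0 else 1) with hj1
  set t := eAux sg rest e1 (hgt C e1) with ht
  obtain ⟨hpos, hle⟩ := eAux_bounds sg rest e1 (hgt C e1) hlen
  have hbit : (if sg e1 = 1 then 0 else 1) ≤ 1 := by split <;> omega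
  have hdiv : j1 / 2 = e1 := by omega
  have hmod : (if j1 % 2 = 0 then (1 : ℤ) else -1) = sg e1 := by
    rcases hsg e1 with h | h <;> simp [hj1, h, Nat.add_mul_mod_self_left] <;> omega
  have h1 : AA C j1 < AA C j1 + t :=
    lt_of_eq_of_lt (add_zero _).symm ((add_lt_add_iff_left _).2 hpos)
  have h2 : AA C j1 + t ≤ AA C (j1 + 1) := by
    show AA C j1 + t ≤ AA C j1 + W (hgt C (j1 / 2))
    rw [hdiv]
    exact add_le_add_right hle _
  have hΩ : AA C j1 + t < omega0 ^ omega0 :=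
    principal_add_omega0_opow omega0 (AA_lt_Omega C j1)
      (lt_of_le_of_lt hle (W_lt_Omega _))
  rw [dec_eq hΩ h1 h2, Ordinal.add_sub_cancel, hdiv, hmod,
    dAux_eAux sg hsg rest (hgt C e1) e1 (Function.update 0 e1 (sg e1)) hch hlen]
  funext i
  rcases eq_or_ne i e1 with rfl | hne
  · by_cases hmem : i ∈ rest <;> simp [hmem]
  · by_cases hmem : i ∈ rest <;> simp [hmem, hne, Function.update_of_ne hne]


/-- Splitting a sum difference over the symmetric difference. -/
private lemma sum_diff_eq (σ τ : Finset ℕ) (v : ℕ → ℝ) :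
    (∑ i ∈ σ, v i) - (∑ i ∈ τ, v i) = (∑ i ∈ σ \ τ, v i) - (∑ i ∈ τ \ σ, v i) := by
  have h1 : (∑ i ∈ σ ∩ τ, v i) + (∑ i ∈ σ \ τ, v i) = ∑ i ∈ σ, v i :=
    Finset.sum_inter_add_sum_sdiff σ τ v
  have h2 : (∑ i ∈ τ ∩ σ, v i) + (∑ i ∈ τ \ σ, v i) = ∑ i ∈ τ, v i :=
    Finset.sum_inter_add_sum_sdiff τ σ v
  rw [Finset.inter_comm] at h2
  linarith

private lemma symmDiff_finset_eq (σ τ : Finset ℕ) : symmDiff σ τ = (σ \ τ) ∪ (τ \ σ) := by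
  rw [symmDiff_def, Finset.sup_eq_union]

end HammingEmbed

/-- The compact space `[0, α]` of ordinals `≤ α` with the order topology. -/
noncomputable instance (a : Ordinal) : CompactSpace (Set.Iic a) :=
  isCompact_iff_compactSpace.mp (by rw [← Set.Icc_bot]; exact isCompact_Icc)

/-- The infinite Hamming cube `Δ_∞` (finite subsets of `ℕ` with the symmetric difference
metric) embeds almost isometrically into `C([0, ω^ω])`. -/
theorem hammingCube_almost_isometric_C_omega_pow_omega :
    ∀ ε : ℝ, 0 < ε →
      ∃ φ : Finset ℕ → C(↥(Set.Iic (Ordinal.omega0 ^ Ordinal.omega0)), ℝ),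
        ∀ σ τ : Finset ℕ,
          (1 - ε) * ((symmDiff σ τ).card : ℝ) ≤ ‖φ σ - φ τ‖ ∧
            ‖φ σ - φ τ‖ ≤ ((symmDiff σ τ).card : ℝ) := by
  intro ε hε
  set C : ℕ := max 1 ⌈1 / ε⌉₊ with hCdef
  have hC1 : 1 ≤ C := le_max_left _ _
  have hC0 : (0 : ℝ) < C := by exact_mod_cast lt_of_lt_of_le one_pos hC1
  have hCε : 1 / ε ≤ (C : ℝ) :=
    le_trans (Nat.le_ceil _) (by exact_mod_cast le_max_right 1 ⌈1 / ε⌉₊)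
  have hinvC : 1 / (C : ℝ) ≤ ε := by
    rw [div_le_iff₀ hC0]
    rw [div_le_iff₀ hε] at hCε
    linarith [mul_comm ε (C : ℝ)]
  set Φ : Finset ℕ → C(↥(Set.Iic (Ordinal.omega0 ^ Ordinal.omega0)), ℝ) :=
    fun σ => ⟨fun p => ∑ i ∈ σ, ((dec C p.1 i : ℤ) : ℝ),
      (G_cont C hC1 σ).comp continuous_subtype_val⟩ with hΦ
  refine ⟨Φ, fun σ τ => ⟨?_, ?_⟩⟩
  · -- lower bound
    rcases eq_or_ne σ τ with rfl | hστ
    · simp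
    rcases le_or_gt (1 - ε) 0 with hε1 | hε1
    · refine le_trans (mul_nonpos_iff.2 (Or.inr ⟨hε1, by positivity⟩)) (norm_nonneg _)
    set d : ℕ := (symmDiff σ τ).card with hd
    have hdpos : 0 < d := by
      rw [hd, Finset.card_pos, Finset.nonempty_iff_ne_empty]
      intro h
      exact hστ (symmDiff_eq_bot.1 h)
    set F : Finset ℕ := symmDiff σ τ with hF
    set F' : Finset ℕ := F.filter (fun i => d ≤ C * (i + 1)) with hF'
    set bad : Finset ℕ := F.filter (fun i => ¬ d ≤ C * (i + 1)) with hbad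
    have hcards : F'.card + bad.card = d := by
      rw [hF', hbad, hd]
      exact Finset.card_filter_add_card_filter_not _
    have hbadsub : bad ⊆ Finset.range ((d - 1) / C) := by
      intro i hi
      rw [hbad, Finset.mem_filter] at hi
      rcases hi with ⟨_, hi2⟩
      push_neg at hi2
      rw [Finset.mem_range]
      have h3 : C * (i + 1) ≤ d - 1 := by omega
      have h4 : (i + 1) * C ≤ d - 1 := by rwa [mul_comm] at h3
      have h5 : i + 1 ≤ (d - 1) / C := (Nat.le_div_iff_mul_le (by omega)).2 h4
      omega
    have hbadcard : bad.card ≤ (d - 1) / C := by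
      simpa using Finset.card_le_card hbadsub
    have hdivle : (d - 1) / C ≤ d - 1 := Nat.div_le_self _ _
    have hF'pos : 0 < F'.card := by omega
    have hbadR : (bad.card : ℝ) ≤ ε * d := by
      have s1 : (bad.card : ℝ) ≤ (((d - 1) / C : ℕ) : ℝ) := by exact_mod_cast hbadcard
      have s2 : (((d - 1) / C : ℕ) : ℝ) ≤ ((d - 1 : ℕ) : ℝ) / (C : ℝ) := Nat.cast_div_le
      have s3 : ((d - 1 : ℕ) : ℝ) / (C : ℝ) ≤ (d : ℝ) / C := by
        gcongr
        exact_mod_cast Nat.sub_le d 1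
      have s4 : (d : ℝ) / C ≤ ε * d := by
        rw [div_eq_mul_one_div, mul_comm ε (d : ℝ)]
        exact mul_le_mul_of_nonneg_left hinvC (Nat.cast_nonneg d)
      linarith
    have hF'R : (1 - ε) * (d : ℝ) ≤ (F'.card : ℝ) := by
      have hc : (F'.card : ℝ) + (bad.card : ℝ) = d := by exact_mod_cast hcards
      nlinarith [Nat.cast_nonneg (α := ℝ) d]
    -- build the witness point
    set sg : ℕ → ℤ := fun i => if i ∈ σ \ τ then 1 else -1 with hsgdef
    have hsg : ∀ i, sg i = 1 ∨ sg i = -1 := by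
      intro i
      rw [hsgdef]
      dsimp only
      split
      · exact Or.inl rfl
      · exact Or.inr rfl
    set L : List ℕ := F'.sort (· ≤ ·) with hL
    have hLlen : L.length = F'.card := Finset.length_sort _
    have hLne : L ≠ [] := by
      intro h
      rw [h] at hLlen
      simp at hLlen
      omega
    obtain ⟨e1, rest, hLcons⟩ := List.exists_cons_of_ne_nil hLne
    have hsort : List.Pairwise (· < ·) L := (Finset.sortedLT_sort F').pairwise
    have hch : List.Chain (· < ·) e1 rest := by
      rw [hLcons] at hsort
      exact List.isChain_iff_pairwise.2 hsort
    have he1F' : e1 ∈ F' := by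
      rw [← Finset.mem_sort (· ≤ ·), ← hL, hLcons]
      exact List.mem_cons_self
    have hcap : F'.card ≤ C * (e1 + 1) := by
      have he1 := he1F'
      rw [hF', Finset.mem_filter] at he1
      rcases he1 with ⟨_, hcond⟩
      calc F'.card ≤ F.card := by rw [hF']; exact Finset.card_filter_le _ _
        _ = d := by rw [hd, hF]
        _ ≤ C * (e1 + 1) := hcond
    have hlen : rest.length ≤ hgt C e1 := by
      have hrl : rest.length + 1 = F'.card := by
        rw [← hLlen, hLcons]; simp
      have hCe1 : 0 < C * (e1 + 1) := Nat.mul_pos (by omega) (by omega)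
      unfold hgt
      omega
    have hle : eAux sg rest e1 (hgt C e1) ≤ W (hgt C e1) :=
      eAux_le sg rest e1 (hgt C e1) hlen
    set xstar : Ordinal :=
      AA C (2 * e1 + (if sg e1 = 1 then 0 else 1)) + eAux sg rest e1 (hgt C e1) with hxstar
    have hxΩ : xstar < Ordinal.omega0 ^ Ordinal.omega0 :=
      Ordinal.principal_add_omega0_opow _ (AA_lt_Omega C _)
        (lt_of_le_of_lt hle (W_lt_Omega _))
    have hdecx : dec C xstar = fun i => if i ∈ e1 :: rest then sg i else 0 :=
      dec_encode C hC1 sg hsg e1 rest hch hlen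
    have hmemL : ∀ i : ℕ, (i ∈ e1 :: rest) ↔ i ∈ F' := by
      intro i
      rw [← hLcons, hL]
      exact Finset.mem_sort _
    have hdec_eval : ∀ i : ℕ, ((dec C xstar i : ℤ) : ℝ)
        = if i ∈ F' then ((sg i : ℤ) : ℝ) else 0 := by
      intro i
      rw [hdecx]
      dsimp only
      by_cases hiF : i ∈ F'
      · rw [if_pos ((hmemL i).2 hiF), if_pos hiF]
      · rw [if_neg (fun h => hiF ((hmemL i).1 h)), if_neg hiF]
        norm_num
    have hA : ∑ i ∈ σ \ τ, ((dec C xstar i : ℤ) : ℝ)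
        = (((σ \ τ).filter (fun i => i ∈ F')).card : ℝ) := by
      rw [← Finset.sum_boole]
      refine Finset.sum_congr rfl fun i hi => ?_
      rw [hdec_eval i]
      by_cases hiF : i ∈ F'
      · rw [if_pos hiF, if_pos hiF, hsgdef]
        dsimp only
        rw [if_pos hi]
        norm_num
      · rw [if_neg hiF, if_neg hiF]
    have hB : ∑ i ∈ τ \ σ, ((dec C xstar i : ℤ) : ℝ)
        = -(((τ \ σ).filter (fun i => i ∈ F')).card : ℝ) := by
      rw [← Finset.sum_boole, ← Finset.sum_neg_distrib]
      refine Finset.sum_congr rfl fun i hi => ?_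
      rw [hdec_eval i]
      have hnot : i ∉ σ \ τ := by
        rcases Finset.mem_sdiff.1 hi with ⟨hiτ, hiσ⟩
        intro h
        exact hiσ (Finset.mem_sdiff.1 h).1
      by_cases hiF : i ∈ F'
      · rw [if_pos hiF, if_pos hiF, hsgdef]
        dsimp only
        rw [if_neg hnot]
        norm_num
      · rw [if_neg hiF, if_neg hiF]
        norm_num
    have hsub : F' ⊆ (σ \ τ) ∪ (τ \ σ) := by
      intro i hi
      rw [hF'] at hi
      have h2 := Finset.filter_subset _ _ hi
      rw [hF] at h2
      rwa [symmDiff_finset_eq] at h2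
    have hdisj : Disjoint (F' ∩ (σ \ τ)) (F' ∩ (τ \ σ)) :=
      Finset.disjoint_of_subset_left Finset.inter_subset_right
        (Finset.disjoint_of_subset_right Finset.inter_subset_right disjoint_sdiff_sdiff)
    have hsplit : ((σ \ τ).filter (fun i => i ∈ F')).card
        + ((τ \ σ).filter (fun i => i ∈ F')).card = F'.card := by
      rw [Finset.filter_mem_eq_inter, Finset.filter_mem_eq_inter,
        Finset.inter_comm (σ \ τ), Finset.inter_comm (τ \ σ),
        ← Finset.card_union_of_disjoint hdisj, ← Finset.inter_union_distrib_left,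
        Finset.inter_eq_left.2 hsub]
    have hval : (Φ σ - Φ τ) ⟨xstar, le_of_lt hxΩ⟩ = (F'.card : ℝ) := by
      rw [ContinuousMap.sub_apply]
      show (∑ i ∈ σ, ((dec C xstar i : ℤ) : ℝ)) - (∑ i ∈ τ, ((dec C xstar i : ℤ) : ℝ))
        = (F'.card : ℝ)
      rw [sum_diff_eq, hA, hB]
      have := congrArg (fun n : ℕ => (n : ℝ)) hsplit
      push_cast at this ⊢
      linarith
    calc (1 - ε) * (d : ℝ) ≤ (F'.card : ℝ) := hF'R
      _ = ‖(Φ σ - Φ τ) ⟨xstar, le_of_lt hxΩ⟩‖ := by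
          rw [hval, Real.norm_eq_abs, abs_of_nonneg (Nat.cast_nonneg _)]
      _ ≤ ‖Φ σ - Φ τ‖ := ContinuousMap.norm_coe_le_norm _ _
  · -- upper bound
    rw [ContinuousMap.norm_le _ (by positivity)]
    intro p
    rw [ContinuousMap.sub_apply]
    show ‖(∑ i ∈ σ, ((dec C p.1 i : ℤ) : ℝ)) - (∑ i ∈ τ, ((dec C p.1 i : ℤ) : ℝ))‖
      ≤ ((symmDiff σ τ).card : ℝ)
    rw [Real.norm_eq_abs, sum_diff_eq]
    have habs : ∀ s : Finset ℕ, |∑ i ∈ s, ((dec C p.1 i : ℤ) : ℝ)| ≤ (s.card : ℝ) := by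
      intro s
      calc |∑ i ∈ s, ((dec C p.1 i : ℤ) : ℝ)| ≤ ∑ i ∈ s, |((dec C p.1 i : ℤ) : ℝ)| :=
            Finset.abs_sum_le_sum_abs _ _
        _ ≤ ∑ i ∈ s, 1 := by
            refine Finset.sum_le_sum fun i _ => ?_
            have h1 := dec_abs C p.1 i
            have h2 : |((dec C p.1 i : ℤ) : ℝ)| = ((|dec C p.1 i| : ℤ) : ℝ) := by
              push_cast
              rfl
            rw [h2]
            exact_mod_cast h1
        _ = (s.card : ℝ) := by simp
    have h1 := habs (σ \ τ)
    have h2 := habs (τ \ σ)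
    have hcard : ((σ \ τ).card : ℝ) + ((τ \ σ).card : ℝ) = ((symmDiff σ τ).card : ℝ) := by
      rw [symmDiff_finset_eq, ← Nat.cast_add,
        Finset.card_union_of_disjoint disjoint_sdiff_sdiff]
    calc |(∑ i ∈ σ \ τ, ((dec C p.1 i : ℤ) : ℝ)) - ∑ i ∈ τ \ σ, ((dec C p.1 i : ℤ) : ℝ)|
        ≤ |∑ i ∈ σ \ τ, ((dec C p.1 i : ℤ) : ℝ)| + |∑ i ∈ τ \ σ, ((dec C p.1 i : ℤ) : ℝ)| := by
          rw [sub_eq_add_neg]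
          exact (abs_add_le _ _).trans (by rw [abs_neg])
      _ ≤ ((σ \ τ).card : ℝ) + ((τ \ σ).card : ℝ) := by linarith
      _ = ((symmDiff σ τ).card : ℝ) := hcard
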